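/- Let ψ′(0+) > −∞. Let C_U, C_D ∈ ℝ satisfy C_U + C_D > 0, let f : ℝ → ℝ be continuous and piecewise continuously differentiable, set f̃(x) = f(x) + C_U q x, and suppose ā is a real number such that f̃′(x) < 0 for x < ā and f̃′(x) > 0 for x > ā (using right-derivatives where f̃ is not differentiable). Fix a* ≤ ā and b* > a*, and define v(x) = −C_U R(x−a*) + (f(a*)/q) Z(x−a*) − φ_{a*}(x; f) for x ≤ b*, v(x) = v(b*) + C_D(x−b*) for x > b*. Then for every x < a* one has v(x) = (−C_U ψ′(0+) + f̃(a*))/q − C_U x, the integral appearing in L v(x) converges absolutely, and (L − q) v(x) + f(x) = f̃(x) − f̃(a*) ≥ 0. -/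

import Mathlib

open MeasureTheory Set Filter Topology

noncomputable section

/-- The Laplace exponent of a spectrally negative Lévy process with data `(γ, σ, ν)`. -/
def psi (γ σ : ℝ) (ν : Measure ℝ) (s : ℝ) : ℝ :=
  γ * s + σ ^ 2 * s ^ 2 / 2 +
    ∫ z in Set.Iio (0 : ℝ), (Real.exp (s * z) - 1 - s * z * (if -1 < z then (1:ℝ) else 0)) ∂ν

/-- `Φ(q) = sup {λ ≥ 0 : ψ(λ) = q}`. -/
def PhiQ (γ σ : ℝ) (ν : Measure ℝ) (q : ℝ) : ℝ :=
  sSup {l : ℝ | 0 ≤ l ∧ psi γ σ ν l = q}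

/-- `Z^{(q)}(x) = 1 + q ∫₀ˣ W(y) dy`. -/
def Zfun (q : ℝ) (W : ℝ → ℝ) (x : ℝ) : ℝ := 1 + q * ∫ y in (0:ℝ)..x, W y

/-- `Z̄^{(q)}(x) = ∫₀ˣ Z(z) dz`. -/
def Zbar (q : ℝ) (W : ℝ → ℝ) (x : ℝ) : ℝ := ∫ z in (0:ℝ)..x, Zfun q W z

/-- `R^{(q)}(x) = Z̄(x) + ψ'(0+)/q`. -/
def Rfun (q psi'0 : ℝ) (W : ℝ → ℝ) (x : ℝ) : ℝ := Zbar q W x + psi'0 / q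

/-- `Ψ(s; h) = ∫_s^∞ e^{-Φ(q)(y-s)} h(y) dy`. -/
def PsiInt (Φq s : ℝ) (h : ℝ → ℝ) : ℝ := ∫ y in Set.Ioi s, Real.exp (-Φq * (y - s)) * h y

/-- `φ_s(x; h) = ∫_s^x W(x-y) h(y) dy`. -/
def phiInt (W : ℝ → ℝ) (s x : ℝ) (h : ℝ → ℝ) : ℝ := ∫ y in s..x, W (x - y) * h y

/-- Integrand of the nonlocal part of the generator `L`. -/
def genInt (h : ℝ → ℝ) (x z : ℝ) : ℝ :=
  h (x + z) - h x - deriv h x * z * (if -1 < z then (1:ℝ) else 0)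

/-- The generator `L` of the Lévy process, applied to a sufficiently smooth function. -/
def Lgen (γ σ : ℝ) (ν : Measure ℝ) (h : ℝ → ℝ) (x : ℝ) : ℝ :=
  γ * deriv h x + σ ^ 2 / 2 * deriv (deriv h) x + ∫ z in Set.Iio (0 : ℝ), genInt h x z ∂ν

/-- Candidate value function for two-sided singular control with barriers `a < b`:
`v(x) = -C_U R(x-a) + (f(a)/q) Z(x-a) - φ_a(x; f)` for `x ≤ b`, extended linearly with
slope `C_D` above `b`. -/
def vTS (q psi'0 C_U C_D a b : ℝ) (W f : ℝ → ℝ) (x : ℝ) : ℝ :=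
  if x ≤ b then
    -C_U * Rfun q psi'0 W (x - a) + f a / q * Zfun q W (x - a) - phiInt W a x f
  else
    (-C_U * Rfun q psi'0 W (b - a) + f a / q * Zfun q W (b - a) - phiInt W a b f)
      + C_D * (x - b)


namespace Stmt1Aux



/-- The sequence `1/(n+1)`. -/
def sseq (n : ℕ) : ℝ := 1 / (n + 1)

lemma sseq_pos (n : ℕ) : 0 < sseq n := by
  have : (0:ℝ) < n + 1 := by positivity
  exact div_pos one_pos this

lemma sseq_le_one (n : ℕ) : sseq n ≤ 1 := by
  rw [sseq, div_le_one (by positivity)]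
  have : (0:ℝ) ≤ n := Nat.cast_nonneg n
  linarith

lemma sseq_tendsto : Tendsto sseq atTop (𝓝[>] (0:ℝ)) := by
  refine tendsto_nhdsWithin_of_tendsto_nhds_of_eventually_within _ ?_ ?_
  · exact tendsto_one_div_add_atTop_nhds_zero_nat
  · exact Eventually.of_forall fun n => sseq_pos n

/-- The integrand of the Lévy–Khintchine integral. -/
def Kfun (s z : ℝ) : ℝ := Real.exp (s * z) - 1 - s * z * (if -1 < z then (1:ℝ) else 0)

lemma K_meas (s : ℝ) : Measurable (Kfun s) := by
  unfold Kfun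
  have h1 : Measurable fun z : ℝ => (if -1 < z then (1:ℝ) else 0) :=
    Measurable.ite measurableSet_Ioi measurable_const measurable_const
  exact ((Real.measurable_exp.comp (measurable_const.mul measurable_id)).sub
    measurable_const).sub ((measurable_const.mul measurable_id).mul h1)

lemma K_abs_le {s z : ℝ} (hs : 0 < s) (hs1 : s ≤ 1) (hz : z < 0) :
    |Kfun s z| ≤ min 1 (z ^ 2) := by
  unfold Kfun
  by_cases h : -1 < z
  · simp only [if_pos h, mul_one]
    have hsz : |s * z| ≤ 1 := by
      rw [abs_mul, abs_of_pos hs, abs_of_neg hz]; nlinarith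
    have h2 := Real.abs_exp_sub_one_sub_id_le hsz
    refine h2.trans (le_min ?_ ?_)
    · calc (s*z)^2 = |s*z|^2 := (sq_abs _).symm
        _ ≤ 1 := by nlinarith [abs_nonneg (s*z)]
    · have hs2 : s^2 ≤ 1 := by nlinarith
      nlinarith [sq_nonneg z]
  · simp only [if_neg h, mul_zero, sub_zero]
    push_neg at h
    have h3 : Real.exp (s * z) ≤ 1 := Real.exp_le_one_iff.mpr (by nlinarith)
    have h4 : 0 < Real.exp (s * z) := Real.exp_pos _
    have h5 : min 1 (z^2) = 1 := min_eq_left (by nlinarith)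
    rw [h5, abs_of_nonpos (by linarith)]
    linarith

lemma K_div_abs_le {s z : ℝ} (hs : 0 < s) (hs1 : s ≤ 1) (hz : z < 0) :
    |Kfun s z / s| ≤ (if -1 < z then z ^ 2 else -z) := by
  rw [abs_div, abs_of_pos hs, div_le_iff₀ hs]
  unfold Kfun
  by_cases h : -1 < z
  · simp only [if_pos h, mul_one]
    have hsz : |s * z| ≤ 1 := by
      rw [abs_mul, abs_of_pos hs, abs_of_neg hz]; nlinarith
    have h2 := Real.abs_exp_sub_one_sub_id_le hsz
    calc |Real.exp (s*z) - 1 - s*z| ≤ (s*z)^2 := h2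
      _ ≤ z^2 * s := by nlinarith
  · simp only [if_neg h, mul_zero, sub_zero]
    push_neg at h
    have h3 : Real.exp (s * z) ≤ 1 := Real.exp_le_one_iff.mpr (by nlinarith)
    have h4 : s * z + 1 ≤ Real.exp (s * z) := Real.add_one_le_exp _
    rw [abs_of_nonpos (by linarith)]
    nlinarith

lemma tendsto_K_div {z : ℝ} :
    Tendsto (fun n : ℕ => Kfun (sseq n) z / sseq n) atTop
      (𝓝 (if -1 < z then 0 else z)) := by
  set c : ℝ := if -1 < z then (1:ℝ) else 0 with hc
  have h1 : HasDerivAt (fun s : ℝ => s * z) z 0 := by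
    simpa using (hasDerivAt_id (0:ℝ)).mul_const z
  have h2 : HasDerivAt (fun s : ℝ => Real.exp (s * z)) z 0 := by
    have := h1.exp
    simpa using this
  have h3 : HasDerivAt (fun s : ℝ => Kfun s z) (z - z * c) 0 := by
    have h4 : HasDerivAt (fun s : ℝ => s * z * c) (z * c) 0 := by
      simpa using (h1.mul_const c)
    unfold Kfun
    rw [← hc]
    exact (h2.sub_const 1).sub h4
  have h5 := hasDerivAt_iff_tendsto_slope.mp h3
  have h6 : Tendsto sseq atTop (𝓝[≠] (0:ℝ)) := by
    refine sseq_tendsto.mono_right (nhdsWithin_mono _ ?_)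
    intro x hx
    exact ne_of_gt hx
  have h7 := h5.comp h6
  have h9 : z - z * c = (if -1 < z then 0 else z) := by
    by_cases h : -1 < z <;> simp [hc, h]
  rw [h9] at h7
  refine h7.congr fun n => ?_
  show slope (fun s : ℝ => Kfun s z) 0 (sseq n) = _
  have hK0 : Kfun 0 z = 0 := by simp [Kfun]
  rw [slope_def_field, hK0, sub_zero, sub_zero]

lemma slope_Ici {F : ℝ → ℝ} {d : ℝ} (h : HasDerivWithinAt F d (Set.Ici 0) 0)
    (h0 : F 0 = 0) :
    Tendsto (fun n : ℕ => F (sseq n) / sseq n) atTop (𝓝 d) := by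
  have h1 := hasDerivWithinAt_iff_tendsto_slope.mp h
  rw [Set.Ici_sdiff_left] at h1
  have h2 := h1.comp sseq_tendsto
  refine h2.congr fun n => ?_
  show slope F 0 (sseq n) = _
  rw [slope_def_field, h0, sub_zero, sub_zero]


lemma K_abs_le_Ioo {s z : ℝ} (hs : 0 < s) (hs1 : s ≤ 1) (h1 : -1 < z) (h2 : z < 0) :
    |Kfun s z| ≤ s * min 1 (z ^ 2) := by
  have h3 := K_div_abs_le hs hs1 h2
  rw [if_pos h1, abs_div, abs_of_pos hs, div_le_iff₀ hs] at h3
  have hmin : min 1 (z ^ 2) = z ^ 2 := min_eq_right (by nlinarith)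
  rw [hmin]
  nlinarith

section ScaleFacts

variable {q psi'0 C_U C_D a b : ℝ} {W f : ℝ → ℝ}

lemma Zfun_of_nonpos (hWzero : ∀ x < 0, W x = 0) {t : ℝ} (ht : t ≤ 0) :
    Zfun q W t = 1 := by
  unfold Zfun
  have h1 : ∫ y in (0:ℝ)..t, W y = 0 := by
    rw [intervalIntegral.integral_symm, intervalIntegral.integral_of_le ht,
      integral_Ioc_eq_integral_Ioo]
    rw [setIntegral_congr_fun measurableSet_Ioo (g := fun _ => (0:ℝ))
      (fun y hy => hWzero y hy.2)]
    simp
  rw [h1]; ring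

lemma Zbar_of_nonpos (hWzero : ∀ x < 0, W x = 0) {t : ℝ} (ht : t ≤ 0) :
    Zbar q W t = t := by
  unfold Zbar
  rw [intervalIntegral.integral_congr (g := fun _ => (1:ℝ))]
  · simp
  · intro z hz
    rw [Set.uIcc_of_ge ht] at hz
    exact Zfun_of_nonpos hWzero hz.2

lemma phiInt_of_le (hWzero : ∀ x < 0, W x = 0) {x : ℝ} (hx : x ≤ a) :
    phiInt W a x f = 0 := by
  unfold phiInt
  rw [intervalIntegral.integral_symm, intervalIntegral.integral_of_le hx]
  rw [setIntegral_congr_fun measurableSet_Ioc (g := fun _ => (0:ℝ))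
    (fun y hy => by rw [hWzero (x - y) (by linarith [hy.1]), zero_mul])]
  simp

lemma vTS_eq_lin (hWzero : ∀ x < 0, W x = 0) (hq : q ≠ 0) (hab : a < b)
    {x : ℝ} (hx : x ≤ a) :
    vTS q psi'0 C_U C_D a b W f x
      = (-C_U * psi'0 + (f a + C_U * q * a)) / q - C_U * x := by
  unfold vTS
  rw [if_pos (by linarith)]
  rw [phiInt_of_le hWzero hx, Rfun, Zbar_of_nonpos hWzero (by linarith),
    Zfun_of_nonpos hWzero (by linarith)]
  field_simp
  ring

end ScaleFacts

end Stmt1Aux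

theorem stmt1
    (γ σ q : ℝ) (ν : Measure ℝ) (W : ℝ → ℝ)
    (hσ : 0 ≤ σ)
    (hνconc : ν (Set.Ici 0) = 0)
    (hνint : Integrable (fun z => min 1 (z ^ 2)) ν)
    (hψtop : Tendsto (psi γ σ ν) atTop atTop)
    (hq : 0 < q)
    (hΦpos : 0 < PhiQ γ σ ν q)
    (hWnonneg : ∀ x, 0 ≤ W x)
    (hWzero : ∀ x < 0, W x = 0)
    (hWcont : ContinuousOn W (Set.Ici 0))
    (hWmono : StrictMonoOn W (Set.Ici 0))
    (hWlaplace : ∀ s, PhiQ γ σ ν q < s →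
      ∫ x in Set.Ioi (0:ℝ), Real.exp (-s * x) * W x = 1 / (psi γ σ ν s - q))
    (psi'0 : ℝ) (hpsi'0 : HasDerivWithinAt (psi γ σ ν) psi'0 (Set.Ici 0) 0)
    (C_U C_D : ℝ) (hC : 0 < C_U + C_D)
    (f f' : ℝ → ℝ) (hf : Continuous f)
    (hf' : ∀ x, HasDerivWithinAt f (f' x) (Set.Ici x) x)
    (abar : ℝ)
    (habar1 : ∀ x < abar, f' x + C_U * q < 0)
    (habar2 : ∀ x, abar < x → 0 < f' x + C_U * q)
    (a b : ℝ) (ha : a ≤ abar) (hab : a < b) :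
    ∀ x < a,
      vTS q psi'0 C_U C_D a b W f x
          = (-C_U * psi'0 + (f a + C_U * q * a)) / q - C_U * x ∧
      IntegrableOn (genInt (vTS q psi'0 C_U C_D a b W f) x) (Set.Iio 0) ν ∧
      Lgen γ σ ν (vTS q psi'0 C_U C_D a b W f) x
          - q * vTS q psi'0 C_U C_D a b W f x + f x
        = (f x + C_U * q * x) - (f a + C_U * q * a) ∧
      0 ≤ (f x + C_U * q * x) - (f a + C_U * q * a) := by
    classical
  intro x hx
  have hq0 : q ≠ 0 := ne_of_gt hq
  set v := vTS q psi'0 C_U C_D a b W f with hv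
  -- Part 1: the linear formula below a
  have hlin : ∀ y ≤ a, v y = (-C_U * psi'0 + (f a + C_U * q * a)) / q - C_U * y :=
    fun y hy => Stmt1Aux.vTS_eq_lin hWzero hq0 hab hy
  -- derivatives of v below a
  have hvd : ∀ y < a, HasDerivAt v (-C_U) y := by
    intro y hy
    have hev : v =ᶠ[𝓝 y]
        fun t => (-C_U * psi'0 + (f a + C_U * q * a)) / q - C_U * t := by
      filter_upwards [Iio_mem_nhds hy] with t ht using hlin t ht.le
    have hL : HasDerivAt
        (fun t : ℝ => (-C_U * psi'0 + (f a + C_U * q * a)) / q - C_U * t) (-C_U) y := by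
      simpa [Pi.sub_def] using (hasDerivAt_const y ((-C_U * psi'0 + (f a + C_U * q * a)) / q)).sub
        ((hasDerivAt_id y).const_mul C_U)
    exact hL.congr_of_eventuallyEq hev
  have hderiv1 : deriv v x = -C_U := (hvd x hx).deriv
  have hderiv2 : deriv (deriv v) x = 0 := by
    have hev : deriv v =ᶠ[𝓝 x] fun _ => -C_U := by
      filter_upwards [Iio_mem_nhds hx] with t ht using (hvd t ht).deriv
    rw [hev.deriv_eq]
    exact deriv_const _ _
  -- genInt formula
  have hgen : ∀ z < 0, genInt v x z = (if -1 < z then 0 else -C_U * z) := by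
    intro z hz
    unfold genInt
    rw [hderiv1, hlin (x + z) (by linarith), hlin x hx.le]
    by_cases h : -1 < z
    · simp only [if_pos h, mul_one]; ring
    · simp only [if_neg h, mul_zero]; ring
  -- set decomposition of Iio 0
  have hun : Set.Iic (-1:ℝ) ∪ Set.Ioo (-1:ℝ) 0 = Set.Iio 0 := by
    ext z
    simp only [Set.mem_union, Set.mem_Iic, Set.mem_Ioo, Set.mem_Iio]
    constructor
    · rintro (h | ⟨h1, h2⟩) <;> linarith
    · intro h
      by_cases h1 : -1 < z
      · exact Or.inr ⟨h1, h⟩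
      · exact Or.inl (not_lt.mp h1)
  have hdisj : Disjoint (Set.Iic (-1:ℝ)) (Set.Ioo (-1:ℝ) 0) := by
    rw [Set.disjoint_left]
    rintro z hz ⟨h1, _⟩
    exact absurd h1 (not_lt.mpr hz)
  have hsub1 : Set.Iic (-1:ℝ) ⊆ Set.Iio 0 := fun z hz => lt_of_le_of_lt hz (by norm_num : (-1:ℝ) < 0)
  have hsub2 : Set.Ioo (-1:ℝ) 0 ⊆ Set.Iio 0 := fun z hz => hz.2
  -- integrability of the Lévy-Khintchine integrand
  have hKint : ∀ n : ℕ, IntegrableOn (Stmt1Aux.Kfun (Stmt1Aux.sseq n)) (Set.Iio 0) ν := by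
    intro n
    refine Integrable.mono (hνint.restrict (s := Set.Iio 0))
      ((Stmt1Aux.K_meas _).aestronglyMeasurable) ?_
    refine (ae_restrict_iff' measurableSet_Iio).2 (ae_of_all _ fun z hz => ?_)
    rw [Real.norm_eq_abs, Real.norm_eq_abs,
      abs_of_nonneg (le_min zero_le_one (sq_nonneg z))]
    exact Stmt1Aux.K_abs_le (Stmt1Aux.sseq_pos n) (Stmt1Aux.sseq_le_one n) hz
  -- F and its slope
  set F : ℝ → ℝ := fun s => ∫ z in Set.Iio (0:ℝ), Stmt1Aux.Kfun s z ∂ν with hF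
  have hFpsi : ∀ s, F s = psi γ σ ν s - (γ * s + σ ^ 2 * s ^ 2 / 2) := by
    intro s
    simp only [hF, psi, Stmt1Aux.Kfun]
    ring
  have hF0 : F 0 = 0 := by
    simp [hF, Stmt1Aux.Kfun]
  have hpoly : HasDerivAt (fun s : ℝ => γ * s + σ ^ 2 * s ^ 2 / 2) γ 0 := by
    have h1 : HasDerivAt (fun s : ℝ => γ * s) γ 0 := by
      simpa using (hasDerivAt_id (0:ℝ)).const_mul γ
    have h2 : HasDerivAt (fun s : ℝ => σ ^ 2 * s ^ 2 / 2) 0 0 := by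
      have := ((hasDerivAt_pow 2 (0:ℝ)).const_mul (σ ^ 2)).div_const 2
      simpa using this
    simpa [Pi.add_def] using h1.add h2
  have hFd : HasDerivWithinAt F (psi'0 - γ) (Set.Ici 0) 0 := by
    have h1 : HasDerivWithinAt (fun s => psi γ σ ν s - (γ * s + σ ^ 2 * s ^ 2 / 2))
        (psi'0 - γ) (Set.Ici 0) 0 := hpsi'0.sub hpoly.hasDerivWithinAt
    exact h1.congr (fun s _ => hFpsi s) (hFpsi 0)
  have hFslope : Tendsto (fun n => F (Stmt1Aux.sseq n) / Stmt1Aux.sseq n) atTop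
      (𝓝 (psi'0 - γ)) := Stmt1Aux.slope_Ici hFd hF0
  -- bound on the Ioo part
  set M := ∫ z, min 1 (z ^ 2) ∂ν with hM
  have hminIoo_int : IntegrableOn (fun z => min 1 (z ^ 2)) (Set.Ioo (-1:ℝ) 0) ν :=
    hνint.integrableOn
  have hF2bound : ∀ n, |∫ z in Set.Ioo (-1:ℝ) 0, Stmt1Aux.Kfun (Stmt1Aux.sseq n) z ∂ν|
      ≤ Stmt1Aux.sseq n * M := by
    intro n
    calc |∫ z in Set.Ioo (-1:ℝ) 0, Stmt1Aux.Kfun (Stmt1Aux.sseq n) z ∂ν|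
        ≤ ∫ z in Set.Ioo (-1:ℝ) 0, |Stmt1Aux.Kfun (Stmt1Aux.sseq n) z| ∂ν :=
          by simpa [Real.norm_eq_abs] using
            norm_integral_le_integral_norm (μ := ν.restrict (Set.Ioo (-1:ℝ) 0))
              (Stmt1Aux.Kfun (Stmt1Aux.sseq n))
      _ ≤ ∫ z in Set.Ioo (-1:ℝ) 0, Stmt1Aux.sseq n * min 1 (z ^ 2) ∂ν := by
          refine integral_mono_of_nonneg (ae_of_all _ fun z => abs_nonneg _)
            (hminIoo_int.const_mul _) ?_
          refine (ae_restrict_iff' measurableSet_Ioo).2 (ae_of_all _ fun z hz => ?_)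
          exact Stmt1Aux.K_abs_le_Ioo (Stmt1Aux.sseq_pos n) (Stmt1Aux.sseq_le_one n) hz.1 hz.2
      _ = Stmt1Aux.sseq n * ∫ z in Set.Ioo (-1:ℝ) 0, min 1 (z ^ 2) ∂ν :=
          integral_const_mul _ _
      _ ≤ Stmt1Aux.sseq n * M := by
          refine mul_le_mul_of_nonneg_left ?_ (Stmt1Aux.sseq_pos n).le
          exact setIntegral_le_integral hνint
            (ae_of_all _ fun z => le_min zero_le_one (sq_nonneg z))
  -- splitting
  have hsplitK : ∀ n, F (Stmt1Aux.sseq n)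
      = (∫ z in Set.Iic (-1:ℝ), Stmt1Aux.Kfun (Stmt1Aux.sseq n) z ∂ν)
        + ∫ z in Set.Ioo (-1:ℝ) 0, Stmt1Aux.Kfun (Stmt1Aux.sseq n) z ∂ν := by
    intro n
    have h := setIntegral_union hdisj measurableSet_Ioo ((hKint n).mono_set hsub1)
      ((hKint n).mono_set hsub2)
    rw [hun] at h
    exact h
  -- the functions h_n of the Fatou argument
  have hhn_int : ∀ n, IntegrableOn
      (fun z => -Stmt1Aux.Kfun (Stmt1Aux.sseq n) z / Stmt1Aux.sseq n) (Set.Iic (-1:ℝ)) ν :=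
    fun n => (((hKint n).mono_set hsub1).neg).div_const _
  have hhn_nonneg : ∀ n, ∀ z ∈ Set.Iic (-1:ℝ),
      0 ≤ -Stmt1Aux.Kfun (Stmt1Aux.sseq n) z / Stmt1Aux.sseq n := by
    intro n z hz
    have hzle : z ≤ -1 := hz
    have h1 : Stmt1Aux.Kfun (Stmt1Aux.sseq n) z ≤ 0 := by
      unfold Stmt1Aux.Kfun
      rw [if_neg (not_lt.mpr hzle), mul_zero, sub_zero]
      have h2 : Real.exp (Stmt1Aux.sseq n * z) ≤ 1 :=
        Real.exp_le_one_iff.mpr (by nlinarith [Stmt1Aux.sseq_pos n])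
      linarith
    exact div_nonneg (neg_nonneg.mpr h1) (Stmt1Aux.sseq_pos n).le
  have hhn_le : ∀ n, ∫ z in Set.Iic (-1:ℝ),
      -Stmt1Aux.Kfun (Stmt1Aux.sseq n) z / Stmt1Aux.sseq n ∂ν
        ≤ -F (Stmt1Aux.sseq n) / Stmt1Aux.sseq n + M := by
    intro n
    have hs := Stmt1Aux.sseq_pos n
    have e1 : ∫ z in Set.Iic (-1:ℝ),
        -Stmt1Aux.Kfun (Stmt1Aux.sseq n) z / Stmt1Aux.sseq n ∂ν
        = (-(F (Stmt1Aux.sseq n))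
            + ∫ z in Set.Ioo (-1:ℝ) 0, Stmt1Aux.Kfun (Stmt1Aux.sseq n) z ∂ν)
          / Stmt1Aux.sseq n := by
      rw [integral_div, integral_neg]
      congr 1
      have := hsplitK n
      linarith
    rw [e1, add_div, neg_div]
    have h2 : (∫ z in Set.Ioo (-1:ℝ) 0, Stmt1Aux.Kfun (Stmt1Aux.sseq n) z ∂ν)
        / Stmt1Aux.sseq n ≤ M := by
      rw [div_le_iff₀ hs]
      calc (∫ z in Set.Ioo (-1:ℝ) 0, Stmt1Aux.Kfun (Stmt1Aux.sseq n) z ∂ν)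
          ≤ |∫ z in Set.Ioo (-1:ℝ) 0, Stmt1Aux.Kfun (Stmt1Aux.sseq n) z ∂ν| := le_abs_self _
        _ ≤ Stmt1Aux.sseq n * M := hF2bound n
        _ = M * Stmt1Aux.sseq n := mul_comm _ _
    linarith
  -- uniform bound
  obtain ⟨C, hC⟩ : ∃ C : ℝ, ∀ n, ∫ z in Set.Iic (-1:ℝ),
      -Stmt1Aux.Kfun (Stmt1Aux.sseq n) z / Stmt1Aux.sseq n ∂ν ≤ C := by
    have hc_tendsto : Tendsto (fun n => -F (Stmt1Aux.sseq n) / Stmt1Aux.sseq n + M) atTop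
        (𝓝 (-(psi'0 - γ) + M)) := by
      have h1 := (hFslope.neg).add_const M
      refine h1.congr fun n => ?_
      rw [neg_div]
    obtain ⟨C, hC⟩ := hc_tendsto.bddAbove_range
    exact ⟨C, fun n => (hhn_le n).trans (hC (Set.mem_range_self n))⟩
  -- Fatou
  have hlint : ∫⁻ z in Set.Iic (-1:ℝ), ENNReal.ofReal (-z) ∂ν ≤ ENNReal.ofReal C := by
    have hmeas : ∀ n : ℕ, Measurable fun z =>
        ENNReal.ofReal (-Stmt1Aux.Kfun (Stmt1Aux.sseq n) z / Stmt1Aux.sseq n) :=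
      fun n => ENNReal.measurable_ofReal.comp ((Stmt1Aux.K_meas _).neg.div_const _)
    have hcongr : ∫⁻ z in Set.Iic (-1:ℝ), ENNReal.ofReal (-z) ∂ν
        = ∫⁻ z in Set.Iic (-1:ℝ), Filter.liminf (fun n =>
            ENNReal.ofReal (-Stmt1Aux.Kfun (Stmt1Aux.sseq n) z / Stmt1Aux.sseq n)) atTop ∂ν := by
      refine lintegral_congr_ae ((ae_restrict_iff' measurableSet_Iic).2
        (ae_of_all _ fun z hz => ?_))
      have ht := Stmt1Aux.tendsto_K_div (z := z)
      rw [if_neg (not_lt.mpr hz)] at ht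
      have ht2 : Tendsto (fun n => -Stmt1Aux.Kfun (Stmt1Aux.sseq n) z / Stmt1Aux.sseq n)
          atTop (𝓝 (-z)) := by
        have := ht.neg
        refine this.congr fun n => ?_
        rw [neg_div]
      have ht3 := (ENNReal.continuous_ofReal.tendsto (-z)).comp ht2
      exact ht3.liminf_eq.symm
    rw [hcongr]
    refine (lintegral_liminf_le hmeas).trans ?_
    have hle : ∀ n : ℕ, ∫⁻ z in Set.Iic (-1:ℝ),
        ENNReal.ofReal (-Stmt1Aux.Kfun (Stmt1Aux.sseq n) z / Stmt1Aux.sseq n) ∂ν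
          ≤ ENNReal.ofReal C := by
      intro n
      rw [← ofReal_integral_eq_lintegral_ofReal (hhn_int n)
        ((ae_restrict_iff' measurableSet_Iic).2 (ae_of_all _ (hhn_nonneg n)))]
      exact ENNReal.ofReal_le_ofReal (hC n)
    calc Filter.liminf (fun n => ∫⁻ z in Set.Iic (-1:ℝ),
          ENNReal.ofReal (-Stmt1Aux.Kfun (Stmt1Aux.sseq n) z / Stmt1Aux.sseq n) ∂ν) atTop
        ≤ Filter.liminf (fun _ : ℕ => ENNReal.ofReal C) atTop :=
          Filter.liminf_le_liminf (Filter.Eventually.of_forall hle)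
      _ = ENNReal.ofReal C := Filter.liminf_const _
  -- integrability of the identity on Iic (-1)
  have hIdInt : IntegrableOn (fun z : ℝ => z) (Set.Iic (-1:ℝ)) ν := by
    refine ⟨measurable_id.aestronglyMeasurable, ?_⟩
    rw [hasFiniteIntegral_iff_norm]
    have hcongr : ∫⁻ z in Set.Iic (-1:ℝ), ENNReal.ofReal ‖(fun z : ℝ => z) z‖ ∂ν
        = ∫⁻ z in Set.Iic (-1:ℝ), ENNReal.ofReal (-z) ∂ν := by
      refine lintegral_congr_ae ((ae_restrict_iff' measurableSet_Iic).2
        (ae_of_all _ fun z hz => ?_))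
      have hz' : z ≤ -1 := hz
      show ENNReal.ofReal ‖z‖ = ENNReal.ofReal (-z)
      rw [Real.norm_eq_abs, abs_of_nonpos (by linarith : z ≤ 0)]
    rw [hcongr]
    exact lt_of_le_of_lt hlint ENNReal.ofReal_lt_top
  -- dominated convergence
  set T : ℝ → ℝ := fun z => if -1 < z then 0 else z with hT
  set G : ℝ → ℝ := fun z => if -1 < z then z ^ 2 else -z with hG
  have hGint : IntegrableOn G (Set.Iio 0) ν := by
    rw [← hun]
    refine IntegrableOn.union ?_ ?_
    · refine MeasureTheory.IntegrableOn.congr_fun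
        (hIdInt.neg : IntegrableOn (fun z : ℝ => -z) _ _) (fun z hz => ?_) measurableSet_Iic
      have hz' : z ≤ -1 := hz
      simp [hG, if_neg (not_lt.mpr hz')]
    · refine MeasureTheory.IntegrableOn.congr_fun hminIoo_int (fun z hz => ?_) measurableSet_Ioo
      have : min 1 (z ^ 2) = z ^ 2 := min_eq_right (by nlinarith [hz.1, hz.2])
      simp [hG, if_pos hz.1, this]
  have hTintIic : IntegrableOn T (Set.Iic (-1:ℝ)) ν := by
    refine MeasureTheory.IntegrableOn.congr_fun hIdInt (fun z hz => ?_) measurableSet_Iic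
    have hz' : z ≤ -1 := hz
    simp [hT, if_neg (not_lt.mpr hz')]
  have hTintIoo : IntegrableOn T (Set.Ioo (-1:ℝ) 0) ν := by
    refine MeasureTheory.IntegrableOn.congr_fun
      (integrableOn_zero : IntegrableOn (fun _ : ℝ => (0:ℝ)) _ _)
      (fun z hz => ?_) measurableSet_Ioo
    simp [hT, if_pos hz.1]
  have hTint : IntegrableOn T (Set.Iio 0) ν := by
    rw [← hun]
    exact hTintIic.union hTintIoo
  have hDCT : Tendsto (fun n => ∫ z in Set.Iio (0:ℝ),
      Stmt1Aux.Kfun (Stmt1Aux.sseq n) z / Stmt1Aux.sseq n ∂ν) atTop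
        (𝓝 (∫ z in Set.Iio (0:ℝ), T z ∂ν)) := by
    refine tendsto_integral_of_dominated_convergence G
      (fun n => ((Stmt1Aux.K_meas _).div_const _).aestronglyMeasurable) hGint ?_ ?_
    · intro n
      refine (ae_restrict_iff' measurableSet_Iio).2 (ae_of_all _ fun z hz => ?_)
      rw [Real.norm_eq_abs]
      exact Stmt1Aux.K_div_abs_le (Stmt1Aux.sseq_pos n) (Stmt1Aux.sseq_le_one n) hz
    · refine (ae_restrict_iff' measurableSet_Iio).2 (ae_of_all _ fun z hz => ?_)
      exact Stmt1Aux.tendsto_K_div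
  have hTval : ∫ z in Set.Iio (0:ℝ), T z ∂ν = psi'0 - γ := by
    refine tendsto_nhds_unique ?_ hFslope
    refine hDCT.congr fun n => ?_
    rw [integral_div, hF]
  have hTsplit : ∫ z in Set.Iio (0:ℝ), T z ∂ν = ∫ z in Set.Iic (-1:ℝ), z ∂ν := by
    rw [← hun, setIntegral_union hdisj measurableSet_Ioo hTintIic hTintIoo]
    have e1 : ∫ z in Set.Iic (-1:ℝ), T z ∂ν = ∫ z in Set.Iic (-1:ℝ), z ∂ν :=
      setIntegral_congr_fun measurableSet_Iic
        (fun z hz => by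
          have hz' : z ≤ -1 := hz
          simp [hT, if_neg (not_lt.mpr hz')])
    have e2 : ∫ z in Set.Ioo (-1:ℝ) 0, T z ∂ν = 0 := by
      rw [setIntegral_congr_fun measurableSet_Ioo
        (g := fun _ => (0:ℝ)) (fun z hz => by simp [hT, if_pos hz.1])]
      simp
    rw [e1, e2, add_zero]
  have hIz : ∫ z in Set.Iic (-1:ℝ), z ∂ν = psi'0 - γ := by rw [← hTsplit, hTval]
  -- the generator integral
  set E : ℝ → ℝ := fun z => if -1 < z then 0 else -C_U * z with hE
  have hEintIic : IntegrableOn E (Set.Iic (-1:ℝ)) ν := by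
    refine MeasureTheory.IntegrableOn.congr_fun
      (hIdInt.const_mul (-C_U) : IntegrableOn (fun z : ℝ => -C_U * z) _ _)
      (fun z hz => ?_) measurableSet_Iic
    have hz' : z ≤ -1 := hz
    simp [hE, if_neg (not_lt.mpr hz')]
  have hEintIoo : IntegrableOn E (Set.Ioo (-1:ℝ) 0) ν := by
    refine MeasureTheory.IntegrableOn.congr_fun
      (integrableOn_zero : IntegrableOn (fun _ : ℝ => (0:ℝ)) _ _)
      (fun z hz => ?_) measurableSet_Ioo
    simp [hE, if_pos hz.1]
  have hEint : IntegrableOn E (Set.Iio 0) ν := by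
    rw [← hun]
    exact hEintIic.union hEintIoo
  have hgenint : IntegrableOn (genInt v x) (Set.Iio 0) ν :=
    MeasureTheory.IntegrableOn.congr_fun hEint (fun z hz => (hgen z hz).symm) measurableSet_Iio
  have hEval : ∫ z in Set.Iio (0:ℝ), genInt v x z ∂ν = -C_U * (psi'0 - γ) := by
    rw [setIntegral_congr_fun measurableSet_Iio (fun z hz => hgen z hz)]
    rw [← hun, setIntegral_union hdisj measurableSet_Ioo hEintIic hEintIoo]
    have e1 : ∫ z in Set.Iic (-1:ℝ), E z ∂ν = -C_U * ∫ z in Set.Iic (-1:ℝ), z ∂ν := by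
      rw [setIntegral_congr_fun measurableSet_Iic
        (g := fun z => -C_U * z) (fun z hz => by
          have hz' : z ≤ -1 := hz
          simp [hE, if_neg (not_lt.mpr hz')])]
      exact integral_const_mul _ _
    have e2 : ∫ z in Set.Ioo (-1:ℝ) 0, E z ∂ν = 0 := by
      rw [setIntegral_congr_fun measurableSet_Ioo
        (g := fun _ => (0:ℝ)) (fun z hz => by simp [hE, if_pos hz.1])]
      simp
    rw [e1, e2, add_zero, hIz]
  -- final inequality via the fencing theorem
  have hineq : 0 ≤ (f x + C_U * q * x) - (f a + C_U * q * a) := by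
    have key : ∀ y ∈ Set.Icc x a, f y + C_U * q * y ≤ f x + C_U * q * x := by
      refine image_le_of_deriv_right_le_deriv_boundary
        (f := fun y => f y + C_U * q * y) (f' := fun y => f' y + C_U * q)
        (B := fun _ => f x + C_U * q * x) (B' := fun _ => 0)
        ?_ ?_ le_rfl continuousOn_const
        (fun y _ => hasDerivWithinAt_const _ _ (f x + C_U * q * x)) ?_
      · exact (hf.add (continuous_const.mul continuous_id)).continuousOn
      · intro y _
        have h1 : HasDerivWithinAt (fun y : ℝ => C_U * q * y) (C_U * q) (Set.Ici y) y := by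
          simpa using ((hasDerivAt_id y).const_mul (C_U * q)).hasDerivWithinAt
        exact (hf' y).add h1
      · intro y hy
        have hy2 : y < abar := lt_of_lt_of_le hy.2 ha
        show f' y + C_U * q ≤ 0
        linarith [habar1 y hy2]
    have := key a ⟨hx.le, le_rfl⟩
    linarith
  refine ⟨hlin x hx.le, hgenint, ?_, hineq⟩
  unfold Lgen
  rw [hderiv1, hderiv2, hEval, hlin x hx.le]
  field_simp
  ring
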